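/- For all real x with 0 < x ≤ 1/2, one has the strict inequality cos²(πx) < 1 − log(2 sin(πx)). -/
import Mathlib

/-- For all real `x` with `0 < x ≤ 1/2`, one has the strict inequality
`cos²(πx) < 1 − log(2 sin(πx))`. -/
theorem stmt_6 (x : ℝ) (hx0 : 0 < x) (hx1 : x ≤ 1 / 2) :
    Real.cos (Real.pi * x) ^ 2 < 1 - Real.log (2 * Real.sin (Real.pi * x)) := by
  have hpi := Real.pi_pos
  have hs : 0 < Real.sin (Real.pi * x) := by
    apply Real.sin_pos_of_pos_of_lt_pi (by positivity)
    nlinarith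
  set s := Real.sin (Real.pi * x) with hsdef
  have hs1 : s ≤ 1 := Real.sin_le_one _
  have hcos : Real.cos (Real.pi * x) ^ 2 = 1 - s ^ 2 := by
    have := Real.sin_sq_add_cos_sq (Real.pi * x); nlinarith
  rw [hcos]
  have key : Real.log (2 * s) < s ^ 2 := by
    rcases eq_or_ne (2 * s) 1 with h | h
    · rw [h, Real.log_one]; nlinarith
    · have := Real.log_lt_sub_one_of_pos (by linarith) h
      nlinarith
  linarith
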